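/- For real sequences satisfying a_{k+1} ≤ (1-τ_k) a_k + 2δ_k with τ_k = 2/(k+3) and constant δ_k = δ ≥ 0, one has a_k ≤ 2a_0/((k+1)(k+2)) + 2δ·∑_{i=0}^{k-1} (i+2)(i+3)/((k+1)(k+2)) ≤ 2a_0/((k+1)(k+2)) + (2/3)δ(k+5) for all k ≥ 1. -/

import Mathlib

private lemma sum_bd (k : ℕ) :
    ∑ i ∈ Finset.range k, ((i : ℝ) + 2) * ((i : ℝ) + 3) ≤
      ((k : ℝ) + 1) * ((k : ℝ) + 2) * ((k : ℝ) + 5) / 3 := by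
  induction k with
  | zero => norm_num
  | succ n ih =>
    rw [Finset.sum_range_succ]
    push_cast
    nlinarith [ih, sq_nonneg ((n:ℝ))]

private lemma key_bd (a : ℕ → ℝ) (δ : ℝ) (hδ : 0 ≤ δ)
    (hrec : ∀ k : ℕ, a (k + 1) ≤ (1 - 2 / ((k : ℝ) + 3)) * a k + 2 * δ) (k : ℕ) :
    ((k : ℝ) + 1) * ((k : ℝ) + 2) * a k ≤
      2 * a 0 + 2 * δ * ∑ i ∈ Finset.range k, ((i : ℝ) + 2) * ((i : ℝ) + 3) := by
  induction k with
  | zero => simp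
  | succ n ih =>
    have h3 : (0:ℝ) < (n:ℝ) + 3 := by positivity
    have h := hrec n
    have h1 : (1 - 2 / ((n : ℝ) + 3)) = ((n:ℝ)+1)/((n:ℝ)+3) := by
      field_simp
      ring
    rw [h1] at h
    have h2 : ((n:ℝ)+2)*((n:ℝ)+3) * a (n+1) ≤
        ((n:ℝ)+1)*((n:ℝ)+2) * a n + 2*δ*(((n:ℝ)+2)*((n:ℝ)+3)) := by
      have hmul : ((n:ℝ)+2)*((n:ℝ)+3) * a (n+1) ≤
          ((n:ℝ)+2)*((n:ℝ)+3) * (((n:ℝ)+1)/((n:ℝ)+3) * a n + 2*δ) := by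
        apply mul_le_mul_of_nonneg_left h (by positivity)
      calc ((n:ℝ)+2)*((n:ℝ)+3) * a (n+1) ≤ _ := hmul
        _ = ((n:ℝ)+1)*((n:ℝ)+2) * a n + 2*δ*(((n:ℝ)+2)*((n:ℝ)+3)) := by
            field_simp
    rw [Finset.sum_range_succ]
    push_cast
    nlinarith [h2, ih]

theorem constant_accuracy_rate (a : ℕ → ℝ) (δ : ℝ)
    (ha0 : 0 ≤ a 0) (hδ : 0 ≤ δ)
    (hrec : ∀ k : ℕ, a (k + 1) ≤ (1 - 2 / ((k : ℝ) + 3)) * a k + 2 * δ) :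
    ∀ k : ℕ, 1 ≤ k →
      a k ≤ 2 * a 0 / (((k : ℝ) + 1) * ((k : ℝ) + 2)) +
          2 * δ * ∑ i ∈ Finset.range k,
            ((i : ℝ) + 2) * ((i : ℝ) + 3) / (((k : ℝ) + 1) * ((k : ℝ) + 2)) ∧
      2 * a 0 / (((k : ℝ) + 1) * ((k : ℝ) + 2)) +
          2 * δ * ∑ i ∈ Finset.range k,
            ((i : ℝ) + 2) * ((i : ℝ) + 3) / (((k : ℝ) + 1) * ((k : ℝ) + 2)) ≤
        2 * a 0 / (((k : ℝ) + 1) * ((k : ℝ) + 2)) + (2 * δ / 3) * ((k : ℝ) + 5) := by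
  intro k hk
  set C : ℝ := ((k : ℝ) + 1) * ((k : ℝ) + 2) with hC
  have hCpos : (0:ℝ) < C := by positivity
  set T : ℝ := ∑ i ∈ Finset.range k, ((i : ℝ) + 2) * ((i : ℝ) + 3) with hT
  have hsum : ∑ i ∈ Finset.range k, ((i : ℝ) + 2) * ((i : ℝ) + 3) / C = T / C := by
    rw [hT, Finset.sum_div]
  have hkey := key_bd a δ hδ hrec k
  have hTb := sum_bd k
  rw [hsum]
  constructor
  · have : a k ≤ (2 * a 0 + 2 * δ * T) / C := by
      rw [le_div_iff₀ hCpos, mul_comm]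
      rw [hC, hT]
      exact hkey
    calc a k ≤ (2 * a 0 + 2 * δ * T) / C := this
      _ = 2 * a 0 / C + 2 * δ * (T / C) := by ring
  · have hTC : T / C ≤ ((k:ℝ) + 5) / 3 := by
      have hTb' : T ≤ C * ((k:ℝ)+5) / 3 := by rw [hC, hT]; linarith [hTb]
      rw [div_le_div_iff₀ hCpos (by norm_num)]
      nlinarith [hTb']
    have := mul_le_mul_of_nonneg_left hTC (by positivity : (0:ℝ) ≤ 2 * δ)
    nlinarith [this]
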